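/- Let G = (A, B, E) be a bipartite graph with μ(G) ≥ 2, π any ordered finite list (stream) of its edges, p ∈ (0, 1], and d ≥ 1 an integer. Let A' ⊆ A be a random subset where each a ∈ A is included independently with probability p, let H = G[A' ∪ B] be the induced subgraph, and let π_H be the substream of π consisting of the edges of H. Then with probability at least 1 − 2·μ(G)^{−18}, |Greedy_d(π_H)| ≥ (d/(d+p)) · p · μ(G) − 6·√(d · μ(G) · ln μ(G)), where Greedy_d is run with degree bound 1 on the A'-vertices and degree bound d on the B-vertices. -/

import Mathlib

open MeasureTheory

variable {α β : Type*} [DecidableEq α] [DecidableEq β]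

/-- `S` is a matching: distinct edges share no endpoint. -/
def IsMatching (M : Finset (α × β)) : Prop :=
  ∀ e ∈ M, ∀ f ∈ M, e ≠ f → e.1 ≠ f.1 ∧ e.2 ≠ f.2

instance (M : Finset (α × β)) : Decidable (IsMatching M) := by
  unfold IsMatching; exact inferInstance

/-- `μ(G)`: maximum size of a matching contained in the edge set `E`. -/
def matchingNumber (E : Finset (α × β)) : ℕ :=
  (E.powerset.filter fun M => IsMatching M).sup Finset.card

/-- degree of `a` on the `A`-side of the edge set `S`. -/
def degA (S : Finset (α × β)) (a : α) : ℕ := (S.filter fun e => e.1 = a).card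

/-- degree of `b` on the `B`-side of the edge set `S`. -/
def degB (S : Finset (α × β)) (b : β) : ℕ := (S.filter fun e => e.2 = b).card

/-- One step of `Greedy_d`: insert edge `e` if its `A`-endpoint is unmatched and
its `B`-endpoint has degree `< d`. -/
def greedyStep (d : ℕ) (S : Finset (α × β)) (e : α × β) : Finset (α × β) :=
  if degA S e.1 = 0 ∧ degB S e.2 < d then insert e S else S

/-- `Greedy_d` run on the stream `π` (degree bound `1` on the `A`-side,
`d` on the `B`-side). -/
def greedyD (d : ℕ) (π : List (α × β)) : Finset (α × β) :=
  π.foldl (greedyStep d) ∅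

set_option linter.unusedSectionVars false
set_option linter.unusedVariables false
namespace Lemma42

/-- run from an arbitrary initial state -/
def run (d : ℕ) (l : List (α × β)) (S : Finset (α × β)) : Finset (α × β) :=
  l.foldl (greedyStep d) S

variable {d : ℕ}

lemma run_nil (S : Finset (α × β)) : run d [] S = S := rfl

lemma run_cons (e : α × β) (l : List (α × β)) (S : Finset (α × β)) :
    run d (e :: l) S = run d l (greedyStep d S e) := rfl

lemma greedyD_eq_run (l : List (α × β)) : greedyD d l = run d l ∅ := rfl

lemma subset_greedyStep (S : Finset (α × β)) (e : α × β) : S ⊆ greedyStep d S e := by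
  unfold greedyStep; split
  · exact Finset.subset_insert _ _
  · exact Finset.Subset.refl _

lemma greedyStep_subset (S : Finset (α × β)) (e : α × β) :
    greedyStep d S e ⊆ insert e S := by
  unfold greedyStep; split
  · exact Finset.Subset.refl _
  · exact Finset.subset_insert _ _

lemma degA_mono {S T : Finset (α × β)} (h : S ⊆ T) (a : α) : degA S a ≤ degA T a :=
  Finset.card_le_card (Finset.filter_subset_filter _ h)

lemma degB_mono {S T : Finset (α × β)} (h : S ⊆ T) (b : β) : degB S b ≤ degB T b :=
  Finset.card_le_card (Finset.filter_subset_filter _ h)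

lemma subset_run (l : List (α × β)) (S : Finset (α × β)) : S ⊆ run d l S := by
  induction l generalizing S with
  | nil => exact Finset.Subset.refl _
  | cons e l ih => exact (subset_greedyStep S e).trans (ih _)

lemma run_subset (l : List (α × β)) (S : Finset (α × β)) : run d l S ⊆ S ∪ l.toFinset := by
  induction l generalizing S with
  | nil => simp [run_nil]
  | cons e l ih =>
    rw [run_cons]
    refine (ih _).trans ?_
    intro x hx
    rcases Finset.mem_union.mp hx with hx | hx
    · rcases Finset.mem_insert.mp (greedyStep_subset S e hx) with h | h
      · subst h; simp
      · simp [Finset.mem_union, h]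
    · simp [Finset.mem_union, Finset.mem_insert]
      right; right; exact List.mem_toFinset.mp hx

/-- the blocking property: after the run, every edge of the stream has a
matched A-endpoint or a saturated B-endpoint. -/
lemma blocking (hd : 1 ≤ d) (l : List (α × β)) (S : Finset (α × β)) :
    ∀ e ∈ l, 1 ≤ degA (run d l S) e.1 ∨ d ≤ degB (run d l S) e.2 := by
  induction l generalizing S with
  | nil => simp
  | cons f l ih =>
    intro e he
    rcases List.mem_cons.mp he with rfl | he
    · -- e is the head
      rw [run_cons]
      unfold greedyStep
      split
      · left
        have : 1 ≤ degA (insert e S) e.1 := by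
          unfold degA
          refine Finset.card_pos.mpr ⟨e, ?_⟩
          simp
        exact this.trans (degA_mono (subset_run _ _) _)
      · rename_i hcond
        rcases Nat.lt_or_ge 0 (degA S e.1) with h | h
        · left; exact h.trans_le (degA_mono (subset_run _ _) _)
        · right
          have h0 : degA S e.1 = 0 := Nat.le_antisymm h (Nat.zero_le _)
          have : d ≤ degB S e.2 := by
            by_contra hlt
            exact hcond ⟨h0, Nat.lt_of_not_le hlt⟩
          exact this.trans (degB_mono (subset_run _ _) _)
    · exact ih _ e he

/-- L3: edges whose A-endpoint ends up unmatched can be removed from the stream. -/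
lemma run_filter_not_mem (K : Finset α) :
    ∀ (l : List (α × β)) (S : Finset (α × β)),
      (∀ a ∈ K, degA (run d l S) a = 0) →
      run d (l.filter fun e => decide (e.1 ∉ K)) S = run d l S := by
  intro l
  induction l with
  | nil => intro S _; simp [run_nil]
  | cons e l ih =>
    intro S h
    by_cases hK : e.1 ∈ K
    · rw [List.filter_cons_of_neg (by simp [hK])]
      have hstep : greedyStep d S e = S := by
        unfold greedyStep
        split
        · exfalso
          have h1 : 1 ≤ degA (insert e S) e.1 := by
            unfold degA
            refine Finset.card_pos.mpr ⟨e, ?_⟩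
            simp
          have h2 : 1 ≤ degA (run d l (insert e S)) e.1 :=
            h1.trans (degA_mono (subset_run _ _) _)
          have h3 := h e.1 hK
          rw [run_cons] at h3
          unfold greedyStep at h3
          rw [if_pos (by assumption)] at h3
          omega
        · rfl
      rw [ih S (fun a ha => by
        have := h a ha
        rwa [run_cons, hstep] at this)]
      rw [run_cons, hstep]
    · rw [List.filter_cons_of_pos (by simp [hK])]
      rw [run_cons, run_cons]
      exact ih _ (fun a ha => by
        have := h a ha
        rwa [run_cons] at this)

/-- L4: a set of A-vertices each of which would individually stay unmatched
can be added to the stream jointly without changing the outcome. -/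
lemma run_filter_or (K : Finset α) :
    ∀ (l : List (α × β)) (S : Finset (α × β)),
      (∀ a ∈ K,
        degA (run d (l.filter fun e => decide (e.1 ∉ K ∨ e.1 = a)) S) a = 0) →
      run d l S = run d (l.filter fun e => decide (e.1 ∉ K)) S := by
  intro l
  induction l with
  | nil => intro S _; simp [run_nil]
  | cons e l ih =>
    intro S h
    by_cases hK : e.1 ∈ K
    · -- head's endpoint is in K : it must be rejected
      have hstep : greedyStep d S e = S := by
        unfold greedyStep
        split
        · exfalso
          have he1 := h e.1 hK
          rw [List.filter_cons_of_pos (by simp)] at he1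
          rw [run_cons] at he1
          unfold greedyStep at he1
          rw [if_pos (by assumption)] at he1
          have h1 : 1 ≤ degA (insert e S) e.1 := by
            unfold degA
            refine Finset.card_pos.mpr ⟨e, ?_⟩
            simp
          have h2 : 1 ≤ degA (run d (l.filter fun e' => decide (e'.1 ∉ K ∨ e'.1 = e.1)) (insert e S)) e.1 :=
            h1.trans (degA_mono (subset_run _ _) _)
          omega
        · rfl
      rw [List.filter_cons_of_neg (by simp [hK])]
      rw [run_cons, hstep]
      refine ih S (fun a ha => ?_)
      have := h a ha
      by_cases hae : e.1 = a
      · rw [List.filter_cons_of_pos (by simp [hae])] at this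
        rwa [run_cons, hstep] at this
      · rwa [List.filter_cons_of_neg (by simp [hK, hae])] at this
    · -- head's endpoint not in K: all lists keep it
      rw [List.filter_cons_of_pos (by simp [hK])]
      rw [run_cons, run_cons]
      refine ih (greedyStep d S e) (fun a ha => ?_)
      have := h a ha
      rw [List.filter_cons_of_pos (by simp [hK])] at this
      simpa [run_cons] using this

end Lemma42

namespace Lemma42

open Finset

variable {α β : Type*} [DecidableEq α] [DecidableEq β] {d : ℕ}

lemma notmem_of_degA_zero {S : Finset (α × β)} {e : α × β} (h : degA S e.1 = 0) :
    e ∉ S := by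
  intro he
  have : e ∈ S.filter fun f => f.1 = e.1 := by simp [he]
  unfold degA at h
  rw [Finset.card_eq_zero] at h
  simp [h] at this

lemma degA_run_le_one {S : Finset (α × β)} (hS : ∀ a, degA S a ≤ 1)
    (l : List (α × β)) : ∀ a, degA (run d l S) a ≤ 1 := by
  induction l generalizing S with
  | nil => exact hS
  | cons e l ih =>
    rw [run_cons]
    refine ih (fun a => ?_)
    unfold greedyStep
    split
    · rename_i hcond
      unfold degA
      rw [Finset.filter_insert]
      split
      · rename_i hea
        have : S.filter (fun f => f.1 = a) = ∅ := by
          rw [← Finset.card_eq_zero]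
          have := hcond.1
          unfold degA at this
          rwa [hea] at this
        rw [this]
        simp
      · exact hS a
    · exact hS a

lemma degB_run_le {S : Finset (α × β)} (hS : ∀ b, degB S b ≤ d)
    (l : List (α × β)) : ∀ b, degB (run d l S) b ≤ d := by
  induction l generalizing S with
  | nil => exact hS
  | cons e l ih =>
    rw [run_cons]
    refine ih (fun b => ?_)
    unfold greedyStep
    split
    · rename_i hcond
      unfold degB
      rw [Finset.filter_insert]
      split
      · rename_i heb
        refine (Finset.card_insert_le _ _).trans ?_
        have := hcond.2
        unfold degB at this
        rw [heb] at this
        omega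
      · exact hS b
    · exact hS b

variable [Fintype α] [Fintype β]

lemma sum_degA (S : Finset (α × β)) : ∑ a : α, degA S a = S.card :=
  (Finset.card_eq_sum_card_fiberwise (f := Prod.fst) (t := Finset.univ)
    (fun x _ => Finset.mem_univ _)).symm

lemma sum_degB (S : Finset (α × β)) : ∑ b : β, degB S b = S.card :=
  (Finset.card_eq_sum_card_fiberwise (f := Prod.snd) (t := Finset.univ)
    (fun x _ => Finset.mem_univ _)).symm

/-- number of A-vertices matched by `S` is at most `|S|`. -/
lemma card_matched_le (S : Finset (α × β)) :
    (Finset.univ.filter fun a : α => 1 ≤ degA S a).card ≤ S.card := by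
  calc (Finset.univ.filter fun a : α => 1 ≤ degA S a).card
      = ∑ a ∈ Finset.univ.filter fun a : α => 1 ≤ degA S a, 1 := by simp
    _ ≤ ∑ a ∈ Finset.univ.filter fun a : α => 1 ≤ degA S a, degA S a :=
        Finset.sum_le_sum (fun a ha => (Finset.mem_filter.mp ha).2)
    _ ≤ ∑ a : α, degA S a :=
        Finset.sum_le_sum_of_subset (Finset.filter_subset _ _)
    _ = S.card := sum_degA S

/-- `d` times the number of saturated B-vertices is at most `|S|`. -/
lemma card_saturated_le (S : Finset (α × β)) (F : Finset β) (hF : ∀ b ∈ F, d ≤ degB S b) :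
    d * F.card ≤ S.card := by
  calc d * F.card = ∑ _b ∈ F, d := by rw [Finset.sum_const, smul_eq_mul, mul_comm]
    _ ≤ ∑ b ∈ F, degB S b := Finset.sum_le_sum hF
    _ ≤ ∑ b : β, degB S b := Finset.sum_le_sum_of_subset (Finset.subset_univ F)
    _ = S.card := sum_degB S

lemma IsMatching.fst_inj {M : Finset (α × β)} (hM : IsMatching M) {e f : α × β}
    (he : e ∈ M) (hf : f ∈ M) (h : e.1 = f.1) : e = f := by
  by_contra hne
  exact (hM e he f hf hne).1 h

lemma IsMatching.snd_inj {M : Finset (α × β)} (hM : IsMatching M) {e f : α × β}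
    (he : e ∈ M) (hf : f ∈ M) (h : e.2 = f.2) : e = f := by
  by_contra hne
  exact (hM e he f hf hne).2 h

lemma fst_ne_of_degA_le_one {S : Finset (α × β)} (hA : ∀ a, degA S a ≤ 1)
    {e f : α × β} (he : e ∈ S) (hf : f ∈ S) (hne : e ≠ f) : e.1 ≠ f.1 := by
  intro h
  have h1 : e ∈ S.filter fun x => x.1 = e.1 := by simp [he]
  have h2 : f ∈ S.filter fun x => x.1 = e.1 := by simp [hf, h.symm]
  have := hA e.1
  unfold degA at this
  have := Finset.card_le_one.mp this e h1 f h2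
  exact hne this

lemma exists_max_matching (E : Finset (α × β)) :
    ∃ M, M ⊆ E ∧ IsMatching M ∧ M.card = matchingNumber E := by
  have hne : (E.powerset.filter fun M => IsMatching M).Nonempty :=
    ⟨∅, Finset.mem_filter.mpr ⟨Finset.empty_mem_powerset _, fun e he => absurd he (by simp)⟩⟩
  obtain ⟨M, hM, hsup⟩ := Finset.exists_mem_eq_sup _ hne Finset.card
  rw [Finset.mem_filter, Finset.mem_powerset] at hM
  exact ⟨M, hM.1, hM.2, hsup.symm⟩

lemma card_le_matchingNumber {E M : Finset (α × β)} (hME : M ⊆ E) (hM : IsMatching M) :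
    M.card ≤ matchingNumber E :=
  Finset.le_sup (Finset.mem_filter.mpr ⟨Finset.mem_powerset.mpr hME, hM⟩)

/-- any greedy run output has size at most `d * μ`. -/
lemma card_run_le_mul (E : Finset (α × β)) (l : List (α × β)) (hl : l.toFinset ⊆ E) :
    (run d l (∅ : Finset (α × β))).card ≤ d * matchingNumber E := by
  set S := run d l (∅ : Finset (α × β)) with hSdef
  have hSE : S ⊆ E := by
    refine (run_subset l ∅).trans ?_
    simpa using hl
  have hA : ∀ a, degA S a ≤ 1 := degA_run_le_one (fun a => by simp [degA]) l
  have hB : ∀ b, degB S b ≤ d := degB_run_le (fun b => by simp [degB]) l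
  -- representatives
  have hrep : ∀ b ∈ S.image Prod.snd, ∃ e, e ∈ S ∧ e.2 = b := by
    intro b hb
    rcases Finset.mem_image.mp hb with ⟨e, he, hbe⟩
    exact ⟨e, he, hbe⟩
  choose g hg1 hg2 using hrep
  set T : Finset (α × β) := (S.image Prod.snd).attach.image (fun x => g x.1 x.2) with hT
  have hTS : T ⊆ S := by
    intro e he
    rcases Finset.mem_image.mp he with ⟨x, _, rfl⟩
    exact hg1 x.1 x.2
  have hTcard : T.card = (S.image Prod.snd).card := by
    rw [hT, Finset.card_image_of_injOn, Finset.card_attach]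
    intro x _ y _ hxy
    dsimp only at hxy
    have : (g x.1 x.2).2 = (g y.1 y.2).2 := by rw [hxy]
    rw [hg2 x.1 x.2, hg2 y.1 y.2] at this
    exact Subtype.ext this
  have hTmatch : IsMatching T := by
    intro e he f hf hne
    constructor
    · exact fst_ne_of_degA_le_one hA (hTS he) (hTS hf) hne
    · rcases Finset.mem_image.mp he with ⟨x, _, rfl⟩
      rcases Finset.mem_image.mp hf with ⟨y, _, rfl⟩
      intro hxy
      have hxy2 : (g x.1 x.2).2 = (g y.1 y.2).2 := hxy
      rw [hg2 x.1 x.2, hg2 y.1 y.2] at hxy2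
      exact hne (by rw [show x = y from Subtype.ext hxy2])
  have h1 : S.card ≤ d * T.card := by
    rw [hTcard]
    have : S.card = ∑ b ∈ S.image Prod.snd, (S.filter fun e => e.2 = b).card :=
      Finset.card_eq_sum_card_fiberwise (fun x hx => Finset.mem_image_of_mem _ hx)
    rw [this]
    calc ∑ b ∈ S.image Prod.snd, (S.filter fun e => e.2 = b).card
        ≤ ∑ _b ∈ S.image Prod.snd, d := Finset.sum_le_sum (fun b _ => hB b)
      _ = d * (S.image Prod.snd).card := by rw [Finset.sum_const, smul_eq_mul, mul_comm]
  exact h1.trans (Nat.mul_le_mul_left d (card_le_matchingNumber (hTS.trans hSE) hTmatch))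

end Lemma42

namespace Lemma42

variable {α β : Type*} [DecidableEq α] [DecidableEq β] {d : ℕ}

/-- greedy output in the world `ω`. -/
def Sw (d : ℕ) (π : List (α × β)) (ω : α → Bool) : Finset (α × β) :=
  greedyD d (π.filter fun e => ω e.1)

/-- set the coordinates in `K` to `false`. -/
def offK (ω : α → Bool) (K : Finset α) : α → Bool := fun a => if a ∈ K then false else ω a

/-- set the coordinates in `K` to `true`. -/
def onK (ω : α → Bool) (K : Finset α) : α → Bool := fun a => if a ∈ K then true else ω a

lemma offK_apply_mem {ω : α → Bool} {K : Finset α} {a : α} (h : a ∈ K) : offK ω K a = false := by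
  simp [offK, h]

lemma offK_apply_not_mem {ω : α → Bool} {K : Finset α} {a : α} (h : a ∉ K) : offK ω K a = ω a := by
  simp [offK, h]

lemma onK_apply_mem {ω : α → Bool} {K : Finset α} {a : α} (h : a ∈ K) : onK ω K a = true := by
  simp [onK, h]

lemma onK_apply_not_mem {ω : α → Bool} {K : Finset α} {a : α} (h : a ∉ K) : onK ω K a = ω a := by
  simp [onK, h]

lemma Sw_offK {π : List (α × β)} {ω : α → Bool} {K : Finset α}
    (h : ∀ a ∈ K, degA (Sw d π ω) a = 0) : Sw d π (offK ω K) = Sw d π ω := by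
  have hfil : π.filter (fun e => offK ω K e.1) =
      (π.filter fun e => ω e.1).filter (fun e => decide (e.1 ∉ K)) := by
    rw [List.filter_filter]
    refine List.filter_congr (fun e _ => ?_)
    by_cases hK : e.1 ∈ K
    · simp [offK, hK]
    · simp [offK, hK]
  unfold Sw greedyD
  rw [hfil]
  exact run_filter_not_mem K _ ∅ h

lemma Sw_onK {π : List (α × β)} {ω : α → Bool} {K : Finset α}
    (hK : ∀ a ∈ K, ω a = false)
    (h : ∀ a ∈ K, degA (Sw d π (onK ω {a})) a = 0) : Sw d π (onK ω K) = Sw d π ω := by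
  have key := run_filter_or (d := d) K (π.filter fun e => onK ω K e.1) ∅ ?_
  · have hfil : (π.filter fun e => onK ω K e.1).filter (fun e => decide (e.1 ∉ K)) =
        π.filter fun e => ω e.1 := by
      rw [List.filter_filter]
      refine List.filter_congr (fun e _ => ?_)
      by_cases hKe : e.1 ∈ K
      · simp [onK, hKe, hK e.1 hKe]
      · simp [onK, hKe]
    unfold Sw greedyD
    rw [← hfil]
    exact key
  · intro a ha
    have hfil2 : (π.filter fun e => onK ω K e.1).filter
        (fun e => decide (e.1 ∉ K ∨ e.1 = a)) = π.filter fun e => onK ω {a} e.1 := by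
      rw [List.filter_filter]
      refine List.filter_congr (fun e _ => ?_)
      by_cases hKe : e.1 ∈ K
      · by_cases hae : e.1 = a
        · simp [onK, hKe, hae, ha]
        · simp [onK, hKe, hae, hK e.1 hKe]
      · have hae : ¬ e.1 = a := fun hc => hKe (hc ▸ ha)
        simp [onK, hKe, hae]
    have := h a ha
    unfold Sw greedyD at this
    rwa [← hfil2] at this

lemma Sw_onK_single {π : List (α × β)} {ω : α → Bool} {a : α}
    (ha : ω a = false) (h : degA (Sw d π (onK ω {a})) a = 0) :
    Sw d π (onK ω {a}) = Sw d π ω :=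
  Sw_onK (fun x hx => by rwa [Finset.mem_singleton.mp hx])
    (fun x hx => by rw [Finset.mem_singleton.mp hx]; exact h)

lemma degA_Sw_zero_of_onK {π : List (α × β)} {ω : α → Bool} {a : α}
    (ha : ω a = false) (h : degA (Sw d π (onK ω {a})) a = 0) :
    degA (Sw d π ω) a = 0 := by
  rw [← Sw_onK_single ha h]; exact h

end Lemma42

namespace Lemma42

/-- Hoeffding's lemma for a Bernoulli variable, mgf form. -/
lemma hoeffding_mgf {p q : ℝ} (hp : 0 < p) (hq : 0 ≤ q) (hpq : p + q = 1) (t : ℝ) :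
    q + p * Real.exp t ≤ Real.exp (p * t + t ^ 2 / 8) := by
  have pos : ∀ x : ℝ, 0 < q + p * Real.exp x := fun x =>
    add_pos_of_nonneg_of_pos hq (mul_pos hp (Real.exp_pos x))
  set g : ℝ → ℝ := fun x => p * x + x ^ 2 / 8 - Real.log (q + p * Real.exp x) with hgdef
  set G1 : ℝ → ℝ := fun x => p + x / 4 - p * Real.exp x / (q + p * Real.exp x) with hG1def
  have hg : ∀ x : ℝ, HasDerivAt g (G1 x) x := by
    intro x
    have h1 : HasDerivAt (fun y : ℝ => p * y) p x := by
      simpa using (hasDerivAt_id x).const_mul p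
    have h2 : HasDerivAt (fun y : ℝ => y ^ 2 / 8) (x / 4) x := by
      have := (hasDerivAt_pow 2 x).div_const 8
      exact this.congr_deriv (by ring)
    have h3 : HasDerivAt (fun y : ℝ => q + p * Real.exp y) (p * Real.exp x) x :=
      ((Real.hasDerivAt_exp x).const_mul p).const_add q
    have h4 := h3.log (ne_of_gt (pos x))
    exact (h1.add h2).sub h4
  have hG1 : ∀ x : ℝ, HasDerivAt G1
      (1 / 4 - (p * Real.exp x * (q + p * Real.exp x) -
        p * Real.exp x * (p * Real.exp x)) / (q + p * Real.exp x) ^ 2) x := by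
    intro x
    have hu : HasDerivAt (fun y : ℝ => p * Real.exp y) (p * Real.exp x) x :=
      (Real.hasDerivAt_exp x).const_mul p
    have hv : HasDerivAt (fun y : ℝ => q + p * Real.exp y) (p * Real.exp x) x :=
      hu.const_add q
    have hquot := hu.div hv (ne_of_gt (pos x))
    have h1 : HasDerivAt (fun y : ℝ => p + y / 4) (1 / 4) x := by
      simpa using ((hasDerivAt_id x).div_const 4).const_add p
    have := h1.sub hquot
    exact this
  have hG2 : ∀ x : ℝ, 0 ≤ 1 / 4 - (p * Real.exp x * (q + p * Real.exp x) -
      p * Real.exp x * (p * Real.exp x)) / (q + p * Real.exp x) ^ 2 := by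
    intro x
    have hv := pos x
    have hv2 : 0 < (q + p * Real.exp x) ^ 2 := by positivity
    have hle : (p * Real.exp x * (q + p * Real.exp x) -
        p * Real.exp x * (p * Real.exp x)) / (q + p * Real.exp x) ^ 2 ≤ 1 / 4 := by
      rw [div_le_iff₀ hv2]
      nlinarith [sq_nonneg (q - p * Real.exp x)]
    linarith
  have hG1diff : Differentiable ℝ G1 := fun x => (hG1 x).differentiableAt
  have hG1mono : Monotone G1 :=
    monotone_of_deriv_nonneg hG1diff (fun x => by rw [(hG1 x).deriv]; exact hG2 x)
  have hG1zero : G1 0 = 0 := by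
    have h1 : q + p * Real.exp 0 = 1 := by rw [Real.exp_zero]; linarith
    simp only [hG1def, Real.exp_zero, mul_one]
    rw [show q + p = 1 by linarith]
    ring
  have hgdiff : Differentiable ℝ g := fun x => (hg x).differentiableAt
  have hg0 : g 0 = 0 := by
    simp only [hgdef, Real.exp_zero, mul_one, mul_zero]
    rw [show q + p = 1 by linarith]
    simp
  have hglower : ∀ x : ℝ, 0 ≤ g x := by
    intro x
    rcases le_total 0 x with hx | hx
    · have hmono : MonotoneOn g (Set.Ici 0) := by
        refine monotoneOn_of_deriv_nonneg (convex_Ici 0) hgdiff.continuous.continuousOn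
          (hgdiff.differentiableOn) (fun y hy => ?_)
        rw [(hg y).deriv, ← hG1zero]
        refine hG1mono ?_
        rw [interior_Ici] at hy
        exact le_of_lt hy
      have := hmono (Set.mem_Ici.mpr (le_refl 0)) (Set.mem_Ici.mpr hx) hx
      rwa [hg0] at this
    · have hanti : AntitoneOn g (Set.Iic 0) := by
        refine antitoneOn_of_deriv_nonpos (convex_Iic 0) hgdiff.continuous.continuousOn
          (hgdiff.differentiableOn) (fun y hy => ?_)
        rw [(hg y).deriv, ← hG1zero]
        refine hG1mono ?_
        rw [interior_Iic] at hy
        exact le_of_lt hy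
      have := hanti (Set.mem_Iic.mpr hx) (Set.mem_Iic.mpr (le_refl 0)) hx
      rwa [hg0] at this
  have hx := hglower t
  have hlog : Real.log (q + p * Real.exp t) ≤ p * t + t ^ 2 / 8 := by
    simp only [hgdef] at hx
    linarith
  calc q + p * Real.exp t = Real.exp (Real.log (q + p * Real.exp t)) :=
        (Real.exp_log (pos t)).symm
    _ ≤ Real.exp (p * t + t ^ 2 / 8) := Real.exp_le_exp.mpr hlog

end Lemma42

namespace Lemma42

open scoped Classical

/-- binomial mgf identity via `Finset.prod_add`. -/
lemma binomial_mgf {γ : Type*} [DecidableEq γ] (C : Finset γ) (x y : ℝ) :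
    ∑ J ∈ C.powerset, x ^ J.card * y ^ (C.card - J.card) = (x + y) ^ C.card := by
  have h := Finset.prod_add (fun _ : γ => x) (fun _ : γ => y) C
  rw [Finset.prod_const] at h
  rw [h]
  refine Finset.sum_congr rfl (fun J hJ => ?_)
  rw [Finset.prod_const, Finset.prod_const,
    Finset.card_sdiff_of_subset (Finset.mem_powerset.mp hJ)]

lemma binomial_total {γ : Type*} [DecidableEq γ] (C : Finset γ) {p q : ℝ} (hpq : p + q = 1) :
    ∑ J ∈ C.powerset, p ^ J.card * q ^ (C.card - J.card) = 1 := by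
  rw [binomial_mgf, hpq, one_pow]

lemma chernoff_upper {γ : Type*} [DecidableEq γ] (C : Finset γ) {p q t s : ℝ}
    (hp : 0 < p) (hq : 0 ≤ q) (hpq : p + q = 1) (ht : 0 < t)
    (hs : p * C.card + t ≤ s) {n : ℕ} (hn : C.card ≤ n) (hn0 : 0 < n) :
    ∑ J ∈ C.powerset, (if s < (J.card : ℝ) then p ^ J.card * q ^ (C.card - J.card) else 0)
      ≤ Real.exp (-2 * t ^ 2 / n) := by
  by_cases hc : C.card = 0
  · rw [Finset.card_eq_zero] at hc
    subst hc
    simp only [Finset.powerset_empty, Finset.sum_singleton, Finset.card_empty]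
    have : ¬ s < ((0 : ℕ) : ℝ) := by
      push_neg
      have : (0:ℝ) ≤ p * 0 + t := by positivity
      simp only [Nat.cast_zero]
      nlinarith
    simp only [this, if_false]
    positivity
  · have hc1 : 1 ≤ C.card := Nat.one_le_iff_ne_zero.mpr hc
    set c : ℝ := (C.card : ℝ) with hcdef
    have hcpos : 0 < c := by positivity
    set lam : ℝ := 4 * t / c with hlam
    have hlampos : 0 < lam := by positivity
    have step1 : ∑ J ∈ C.powerset,
        (if s < (J.card : ℝ) then p ^ J.card * q ^ (C.card - J.card) else 0)
        ≤ ∑ J ∈ C.powerset,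
          Real.exp (lam * ((J.card : ℝ) - s)) * (p ^ J.card * q ^ (C.card - J.card)) := by
      refine Finset.sum_le_sum (fun J _ => ?_)
      split
      · rename_i hJs
        refine le_mul_of_one_le_left (by positivity) ?_
        rw [← Real.exp_zero]
        refine Real.exp_le_exp.mpr ?_
        have : (0:ℝ) < (J.card : ℝ) - s := by linarith
        positivity
      · positivity
    have step2 : ∑ J ∈ C.powerset,
        Real.exp (lam * ((J.card : ℝ) - s)) * (p ^ J.card * q ^ (C.card - J.card))
        = Real.exp (-(lam * s)) * (p * Real.exp lam + q) ^ C.card := by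
      rw [← binomial_mgf C (p * Real.exp lam) q, Finset.mul_sum]
      refine Finset.sum_congr rfl (fun J _ => ?_)
      rw [show lam * ((J.card:ℝ) - s) = (J.card:ℝ) * lam + -(lam * s) by ring,
        Real.exp_add, Real.exp_nat_mul, mul_pow]
      ring
    have step3 : (p * Real.exp lam + q) ^ C.card
        ≤ Real.exp (p * lam + lam ^ 2 / 8) ^ C.card := by
      refine pow_le_pow_left₀ (by positivity) ?_ _
      have := hoeffding_mgf hp hq hpq lam
      linarith
    have step4 : Real.exp (-(lam * s)) * Real.exp (p * lam + lam ^ 2 / 8) ^ C.card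
        = Real.exp (-(lam * s) + c * (p * lam + lam ^ 2 / 8)) := by
      rw [← Real.exp_nat_mul, ← Real.exp_add, hcdef]
    have step5 : -(lam * s) + c * (p * lam + lam ^ 2 / 8) ≤ -2 * t ^ 2 / c := by
      have h1 : -(lam * s) ≤ -(lam * (p * c + t)) := by
        have := mul_le_mul_of_nonneg_left hs (le_of_lt hlampos)
        linarith
      have h2 : lam ^ 2 = 16 * t ^ 2 / c ^ 2 := by
        rw [hlam]; field_simp; ring
      have h3 : c * (lam ^ 2 / 8) = 2 * t ^ 2 / c := by
        rw [h2]; field_simp; ring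
      have h4 : lam * t = 4 * t ^ 2 / c := by
        rw [hlam]; field_simp
      have : -(lam * (p * c + t)) + c * (p * lam + lam ^ 2 / 8) = -2 * t ^ 2 / c := by
        have expand : -(lam * (p * c + t)) + c * (p * lam + lam ^ 2 / 8)
            = -(lam * t) + c * (lam ^ 2 / 8) := by ring
        rw [expand, h4, h3]; ring
      linarith
    have step6 : Real.exp (-2 * t ^ 2 / c) ≤ Real.exp (-2 * t ^ 2 / n) := by
      refine Real.exp_le_exp.mpr ?_
      rw [neg_mul, neg_div, neg_div, neg_le_neg_iff]
      refine div_le_div_of_nonneg_left (by positivity) hcpos ?_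
      rw [hcdef]
      exact_mod_cast hn
    calc ∑ J ∈ C.powerset,
        (if s < (J.card : ℝ) then p ^ J.card * q ^ (C.card - J.card) else 0)
        ≤ Real.exp (-(lam * s)) * (p * Real.exp lam + q) ^ C.card := by
          rw [← step2]; exact step1
      _ ≤ Real.exp (-(lam * s)) * Real.exp (p * lam + lam ^ 2 / 8) ^ C.card :=
          mul_le_mul_of_nonneg_left step3 (le_of_lt (Real.exp_pos _))
      _ = Real.exp (-(lam * s) + c * (p * lam + lam ^ 2 / 8)) := step4
      _ ≤ Real.exp (-2 * t ^ 2 / c) := Real.exp_le_exp.mpr step5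
      _ ≤ Real.exp (-2 * t ^ 2 / n) := step6

lemma chernoff_lower {γ : Type*} [DecidableEq γ] (C : Finset γ) {p q t s : ℝ}
    (hp : 0 < p) (hq : 0 ≤ q) (hpq : p + q = 1) (ht : 0 < t)
    (hs : s ≤ p * C.card - t) (hc0 : 0 < C.card) :
    ∑ J ∈ C.powerset, (if (J.card : ℝ) < s then p ^ J.card * q ^ (C.card - J.card) else 0)
      ≤ Real.exp (-2 * t ^ 2 / C.card) := by
  set c : ℝ := (C.card : ℝ) with hcdef
  have hcpos : 0 < c := by positivity
  set lam : ℝ := 4 * t / c with hlam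
  have hlampos : 0 < lam := by positivity
  have step1 : ∑ J ∈ C.powerset,
      (if (J.card : ℝ) < s then p ^ J.card * q ^ (C.card - J.card) else 0)
      ≤ ∑ J ∈ C.powerset,
        Real.exp (lam * (s - (J.card : ℝ))) * (p ^ J.card * q ^ (C.card - J.card)) := by
    refine Finset.sum_le_sum (fun J _ => ?_)
    split
    · rename_i hJs
      refine le_mul_of_one_le_left (by positivity) ?_
      rw [← Real.exp_zero]
      refine Real.exp_le_exp.mpr ?_
      have : (0:ℝ) < s - (J.card : ℝ) := by linarith
      positivity
    · positivity
  have step2 : ∑ J ∈ C.powerset,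
      Real.exp (lam * (s - (J.card : ℝ))) * (p ^ J.card * q ^ (C.card - J.card))
      = Real.exp (lam * s) * (p * Real.exp (-lam) + q) ^ C.card := by
    rw [← binomial_mgf C (p * Real.exp (-lam)) q, Finset.mul_sum]
    refine Finset.sum_congr rfl (fun J _ => ?_)
    rw [show lam * (s - (J.card:ℝ)) = (J.card:ℝ) * (-lam) + lam * s by ring,
      Real.exp_add, Real.exp_nat_mul, mul_pow]
    ring
  have step3 : (p * Real.exp (-lam) + q) ^ C.card
      ≤ Real.exp (p * (-lam) + lam ^ 2 / 8) ^ C.card := by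
    refine pow_le_pow_left₀ (by positivity) ?_ _
    have := hoeffding_mgf hp hq hpq (-lam)
    rw [neg_sq] at this
    linarith
  have step4 : Real.exp (lam * s) * Real.exp (p * (-lam) + lam ^ 2 / 8) ^ C.card
      = Real.exp (lam * s + c * (p * (-lam) + lam ^ 2 / 8)) := by
    rw [← Real.exp_nat_mul, ← Real.exp_add, hcdef]
  have step5 : lam * s + c * (p * (-lam) + lam ^ 2 / 8) ≤ -2 * t ^ 2 / c := by
    have h1 : lam * s ≤ lam * (p * c - t) :=
      mul_le_mul_of_nonneg_left hs (le_of_lt hlampos)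
    have h3 : c * (lam ^ 2 / 8) = 2 * t ^ 2 / c := by
      rw [hlam]; field_simp; ring
    have h4 : lam * t = 4 * t ^ 2 / c := by
      rw [hlam]; field_simp
    have : lam * (p * c - t) + c * (p * (-lam) + lam ^ 2 / 8) = -2 * t ^ 2 / c := by
      have expand : lam * (p * c - t) + c * (p * (-lam) + lam ^ 2 / 8)
          = -(lam * t) + c * (lam ^ 2 / 8) := by ring
      rw [expand, h4, h3]; ring
    linarith
  calc ∑ J ∈ C.powerset,
      (if (J.card : ℝ) < s then p ^ J.card * q ^ (C.card - J.card) else 0)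
      ≤ Real.exp (lam * s) * (p * Real.exp (-lam) + q) ^ C.card := by
        rw [← step2]; exact step1
    _ ≤ Real.exp (lam * s) * Real.exp (p * (-lam) + lam ^ 2 / 8) ^ C.card :=
        mul_le_mul_of_nonneg_left step3 (le_of_lt (Real.exp_pos _))
    _ = Real.exp (lam * s + c * (p * (-lam) + lam ^ 2 / 8)) := step4
    _ ≤ Real.exp (-2 * t ^ 2 / c) := Real.exp_le_exp.mpr step5

end Lemma42

namespace Lemma42

open Finset
open scoped Classical

section Fiber

variable {α β : Type*} [DecidableEq α] [DecidableEq β] [Fintype α] [Fintype β]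
variable (d : ℕ) (π : List (α × β)) (M : Finset (α × β))

/-- real weight of a world. -/
def wt (p : ℝ) (ω : α → Bool) : ℝ := ∏ a : α, (if ω a then p else 1 - p)

/-- blamed edges of the matching `M`: sampled but with unmatched A-endpoint. -/
def bl (ω : α → Bool) : Finset (α × β) :=
  M.filter (fun e => ω e.1 = true ∧ degA (Sw d π ω) e.1 = 0)

def blA (ω : α → Bool) : Finset α := (bl d π M ω).image Prod.fst

def pivot (ω : α → Bool) : α → Bool := offK ω (blA d π M ω)

/-- candidate edges at a pivot world. -/
def cand (τ : α → Bool) : Finset (α × β) :=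
  M.filter (fun e => τ e.1 = false ∧ degA (Sw d π (onK τ {e.1})) e.1 = 0)

def candA (τ : α → Bool) : Finset α := (cand d π M τ).image Prod.fst

lemma wt_nonneg {p : ℝ} (hp0 : 0 ≤ p) (hp1 : p ≤ 1) (ω : α → Bool) : 0 ≤ wt p ω := by
  refine Finset.prod_nonneg (fun a _ => ?_)
  split <;> linarith

lemma degA_zero_of_mem_blA {ω : α → Bool} {a : α} (h : a ∈ blA d π M ω) :
    degA (Sw d π ω) a = 0 := by
  rcases Finset.mem_image.mp h with ⟨e, he, rfl⟩
  exact (Finset.mem_filter.mp he).2.2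

lemma omega_true_of_mem_blA {ω : α → Bool} {a : α} (h : a ∈ blA d π M ω) :
    ω a = true := by
  rcases Finset.mem_image.mp h with ⟨e, he, rfl⟩
  exact (Finset.mem_filter.mp he).2.1

lemma Sw_pivot (ω : α → Bool) : Sw d π (pivot d π M ω) = Sw d π ω :=
  Sw_offK (fun a ha => degA_zero_of_mem_blA d π M ha)

lemma bl_pivot (ω : α → Bool) : bl d π M (pivot d π M ω) = ∅ := by
  rw [Finset.eq_empty_iff_forall_notMem]
  intro e he
  rw [bl, Finset.mem_filter] at he
  obtain ⟨heM, htrue, hdeg⟩ := he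
  have hnotin : e.1 ∉ blA d π M ω := by
    intro hin
    rw [pivot, offK_apply_mem hin] at htrue
    exact Bool.false_ne_true htrue
  rw [pivot, offK_apply_not_mem hnotin] at htrue
  rw [Sw_pivot] at hdeg
  exact hnotin (Finset.mem_image_of_mem Prod.fst
    (Finset.mem_filter.mpr ⟨heM, htrue, hdeg⟩))

lemma bl_subset_cand (ω : α → Bool) : bl d π M ω ⊆ cand d π M (pivot d π M ω) := by
  intro e he
  have heA : e.1 ∈ blA d π M ω := Finset.mem_image_of_mem Prod.fst he
  rw [bl, Finset.mem_filter] at he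
  obtain ⟨heM, htrue, hdeg⟩ := he
  rw [cand, Finset.mem_filter]
  refine ⟨heM, by rw [pivot, offK_apply_mem heA], ?_⟩
  have hfun : onK (pivot d π M ω) {e.1} = offK ω (blA d π M ω \ {e.1}) := by
    funext a
    by_cases ha1 : a = e.1
    · subst ha1
      rw [onK_apply_mem (Finset.mem_singleton_self _),
        offK_apply_not_mem (by simp), htrue]
    · rw [onK_apply_not_mem (by simp [ha1]), pivot]
      by_cases ha2 : a ∈ blA d π M ω
      · rw [offK_apply_mem ha2, offK_apply_mem (Finset.mem_sdiff.mpr ⟨ha2, by simp [ha1]⟩)]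
      · rw [offK_apply_not_mem ha2, offK_apply_not_mem (by simp [ha2])]
  rw [hfun, Sw_offK (fun a ha => degA_zero_of_mem_blA d π M (Finset.mem_sdiff.mp ha).1)]
  exact hdeg

lemma tau_false_of_mem_candA {τ : α → Bool} {a : α} (h : a ∈ candA d π M τ) :
    τ a = false := by
  rcases Finset.mem_image.mp h with ⟨e, he, rfl⟩
  exact (Finset.mem_filter.mp he).2.1

lemma degA_onK_zero_of_mem_candA {τ : α → Bool} {a : α} (h : a ∈ candA d π M τ) :
    degA (Sw d π (onK τ {a})) a = 0 := by
  rcases Finset.mem_image.mp h with ⟨e, he, rfl⟩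
  exact (Finset.mem_filter.mp he).2.2

/-- the world obtained by switching on the A-endpoints of `J`. -/
def onJ (τ : α → Bool) (J : Finset (α × β)) : α → Bool := onK τ (J.image Prod.fst)

lemma Sw_onJ {τ : α → Bool} {J : Finset (α × β)} (hJ : J ⊆ cand d π M τ) :
    Sw d π (onJ τ J) = Sw d π τ := by
  have himg : J.image Prod.fst ⊆ candA d π M τ := Finset.image_subset_image hJ
  exact Sw_onK (fun a ha => tau_false_of_mem_candA d π M (himg ha))
    (fun a ha => degA_onK_zero_of_mem_candA d π M (himg ha))

lemma bl_onJ (hM : IsMatching M) {τ : α → Bool} (hτ : bl d π M τ = ∅)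
    {J : Finset (α × β)} (hJ : J ⊆ cand d π M τ) :
    bl d π M (onJ τ J) = J := by
  have himg : J.image Prod.fst ⊆ candA d π M τ := Finset.image_subset_image hJ
  have hJM : J ⊆ M := hJ.trans (Finset.filter_subset _ _)
  ext e
  constructor
  · intro he
    rw [bl, Finset.mem_filter] at he
    obtain ⟨heM, htrue, hdeg⟩ := he
    rw [Sw_onJ d π M hJ] at hdeg
    by_cases hin : e.1 ∈ J.image Prod.fst
    · rcases Finset.mem_image.mp hin with ⟨e', he', h1⟩
      rwa [IsMatching.fst_inj hM heM (hJM he') h1.symm]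
    · rw [onJ, onK_apply_not_mem hin] at htrue
      exfalso
      have : e ∈ bl d π M τ := Finset.mem_filter.mpr ⟨heM, htrue, hdeg⟩
      rw [hτ] at this
      exact absurd this (Finset.notMem_empty e)
  · intro he
    have heA : e.1 ∈ J.image Prod.fst := Finset.mem_image_of_mem Prod.fst he
    refine Finset.mem_filter.mpr ⟨hJM he, by rw [onJ, onK_apply_mem heA], ?_⟩
    rw [Sw_onJ d π M hJ]
    exact degA_Sw_zero_of_onK (tau_false_of_mem_candA d π M (himg heA))
      (degA_onK_zero_of_mem_candA d π M (himg heA))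

lemma pivot_onJ (hM : IsMatching M) {τ : α → Bool} (hτ : bl d π M τ = ∅)
    {J : Finset (α × β)} (hJ : J ⊆ cand d π M τ) :
    pivot d π M (onJ τ J) = τ := by
  have himg : J.image Prod.fst ⊆ candA d π M τ := Finset.image_subset_image hJ
  rw [pivot, blA, bl_onJ d π M hM hτ hJ]
  funext a
  by_cases ha : a ∈ J.image Prod.fst
  · rw [offK_apply_mem ha, (tau_false_of_mem_candA d π M (himg ha))]
  · rw [offK_apply_not_mem ha, onJ, onK_apply_not_mem ha]

lemma onJ_pivot (ω : α → Bool) : onJ (pivot d π M ω) (bl d π M ω) = ω := by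
  funext a
  rw [onJ]
  by_cases ha : a ∈ (bl d π M ω).image Prod.fst
  · rw [onK_apply_mem ha, omega_true_of_mem_blA d π M ha]
  · rw [onK_apply_not_mem ha, pivot, blA, offK_apply_not_mem ha]

/-- master re-parametrization of sums over all worlds by (pivot, blamed-set) fibers. -/
lemma sum_fiber (hM : IsMatching M) (F : (α → Bool) → ℝ) :
    ∑ ω : α → Bool, F ω =
      ∑ x ∈ (Finset.univ.filter fun τ : α → Bool => bl d π M τ = ∅).sigma
          (fun τ => (cand d π M τ).powerset),
        F (onJ x.1 x.2) := by
  refine Finset.sum_bij' (i := fun ω _ => ⟨pivot d π M ω, bl d π M ω⟩)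
    (j := fun x _ => onJ x.1 x.2) ?_ ?_ ?_ ?_ ?_
  · intro ω _
    rw [Finset.mem_sigma]
    constructor
    · rw [Finset.mem_filter]
      exact ⟨Finset.mem_univ _, bl_pivot d π M ω⟩
    · exact Finset.mem_powerset.mpr (bl_subset_cand d π M ω)
  · intro x _
    exact Finset.mem_univ _
  · intro ω _
    exact onJ_pivot d π M ω
  · intro x hx
    rw [Finset.mem_sigma, Finset.mem_filter, Finset.mem_powerset] at hx
    obtain ⟨⟨_, hτ⟩, hJ⟩ := hx
    exact Sigma.ext (pivot_onJ d π M hM hτ hJ)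
      (heq_of_eq (bl_onJ d π M hM hτ hJ))
  · intro ω _
    rw [onJ_pivot d π M ω]

/-- weight factorization on a fiber. -/
lemma wt_onJ (p : ℝ) (hM : IsMatching M) {τ : α → Bool}
    {J : Finset (α × β)} (hJ : J ⊆ cand d π M τ) :
    wt p (onJ τ J) =
      (∏ a ∈ (candA d π M τ)ᶜ, (if τ a then p else 1 - p)) *
        (p ^ J.card * (1 - p) ^ ((cand d π M τ).card - J.card)) := by
  have hJM : J ⊆ M := hJ.trans (Finset.filter_subset _ _)
  have hcandM : cand d π M τ ⊆ M := Finset.filter_subset _ _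
  have himg : J.image Prod.fst ⊆ candA d π M τ := Finset.image_subset_image hJ
  have hJcard : (J.image Prod.fst).card = J.card :=
    Finset.card_image_of_injOn (fun e he e' he' h => IsMatching.fst_inj hM (hJM he) (hJM he') h)
  have hCcard : (candA d π M τ).card = (cand d π M τ).card :=
    Finset.card_image_of_injOn (fun e he e' he' h => IsMatching.fst_inj hM (hcandM he) (hcandM he') h)
  rw [wt, ← Finset.prod_mul_prod_compl (candA d π M τ)
    (fun a => if onJ τ J a then p else 1 - p)]
  have h1 : ∏ a ∈ (candA d π M τ)ᶜ, (if onJ τ J a then p else 1 - p)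
      = ∏ a ∈ (candA d π M τ)ᶜ, (if τ a then p else 1 - p) := by
    refine Finset.prod_congr rfl (fun a ha => ?_)
    have : a ∉ J.image Prod.fst := fun hc => (Finset.mem_compl.mp ha) (himg hc)
    rw [onJ, onK_apply_not_mem this]
  have h2 : ∏ a ∈ candA d π M τ, (if onJ τ J a then p else 1 - p)
      = p ^ J.card * (1 - p) ^ ((cand d π M τ).card - J.card) := by
    rw [← Finset.prod_sdiff himg]
    have hJpart : ∏ a ∈ J.image Prod.fst, (if onJ τ J a then p else 1 - p) = p ^ J.card := by
      rw [← hJcard, ← Finset.prod_const]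
      refine Finset.prod_congr rfl (fun a ha => ?_)
      rw [onJ, onK_apply_mem ha, if_pos rfl]
    have hCpart : ∏ a ∈ candA d π M τ \ J.image Prod.fst, (if onJ τ J a then p else 1 - p)
        = (1 - p) ^ ((cand d π M τ).card - J.card) := by
      have hcard : (candA d π M τ \ J.image Prod.fst).card = (cand d π M τ).card - J.card := by
        rw [Finset.card_sdiff_of_subset himg, hJcard, hCcard]
      rw [← hcard, ← Finset.prod_const]
      refine Finset.prod_congr rfl (fun a ha => ?_)
      rw [Finset.mem_sdiff] at ha
      rw [onJ, onK_apply_not_mem ha.2, tau_false_of_mem_candA d π M ha.1]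
      simp
    rw [hJpart, hCpart]
    ring
  rw [h1, h2]
  ring

end Fiber

end Lemma42

namespace Lemma42

open Finset
open scoped Classical

section FiberT

variable {α β : Type*} [DecidableEq α] [DecidableEq β] [Fintype α] [Fintype β]
variable (d : ℕ) (π : List (α × β)) (M : Finset (α × β))

/-- total weight is 1. -/
lemma sum_wt (p : ℝ) : ∑ ω : α → Bool, wt p ω = 1 := by
  have hbij : ∑ ω : α → Bool, wt p ω =
      ∑ s ∈ (Finset.univ : Finset α).powerset,
        p ^ s.card * (1 - p) ^ ((Finset.univ : Finset α).card - s.card) := by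
    refine Finset.sum_bij' (i := fun ω _ => Finset.univ.filter (fun a => ω a = true))
      (j := fun s _ => fun a => decide (a ∈ s)) ?_ ?_ ?_ ?_ ?_
    · intro ω _
      exact Finset.mem_powerset.mpr (Finset.filter_subset _ _)
    · intro s _
      exact Finset.mem_univ _
    · intro ω _
      funext a
      cases hb : ω a <;> simp [hb]
    · intro s _
      ext a
      simp
    · intro ω _
      rw [wt, ← Finset.prod_mul_prod_compl (Finset.univ.filter (fun a => ω a = true))]
      have h1 : ∏ a ∈ Finset.univ.filter (fun a => ω a = true),
          (if ω a then p else 1 - p) = p ^ (Finset.univ.filter (fun a => ω a = true)).card := by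
        rw [← Finset.prod_const]
        exact Finset.prod_congr rfl (fun a ha => by
          rw [if_pos (Finset.mem_filter.mp ha).2])
      have h2 : ∏ a ∈ (Finset.univ.filter (fun a => ω a = true))ᶜ,
          (if ω a then p else 1 - p)
          = (1 - p) ^ ((Finset.univ : Finset α).card
              - (Finset.univ.filter (fun a => ω a = true)).card) := by
        rw [Finset.card_univ, ← Finset.card_compl, ← Finset.prod_const]
        refine Finset.prod_congr rfl (fun a ha => ?_)
        rw [Finset.mem_compl, Finset.mem_filter] at ha
        rw [if_neg (fun hc => ha (by simp [hc]))]
      rw [h1, h2]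
  rw [hbij]
  exact binomial_total _ (by ring)

/-- pivot for the `T`-decomposition: switch off all A-endpoints of `M`. -/
def pivT (ω : α → Bool) : α → Bool := offK ω (M.image Prod.fst)

def TJ (ω : α → Bool) : Finset (α × β) := M.filter (fun e => ω e.1 = true)

lemma onJ_pivT (ω : α → Bool) : onJ (pivT M ω) (TJ M ω) = ω := by
  funext a
  rw [onJ]
  by_cases ha : a ∈ (TJ M ω).image Prod.fst
  · rw [onK_apply_mem ha]
    rcases Finset.mem_image.mp ha with ⟨e, he, rfl⟩
    exact ((Finset.mem_filter.mp he).2).symm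
  · rw [onK_apply_not_mem ha, pivT]
    by_cases hb : a ∈ M.image Prod.fst
    · rw [offK_apply_mem hb]
      rcases Finset.mem_image.mp hb with ⟨e, he, rfl⟩
      by_cases hω : ω e.1 = true
      · exact absurd (Finset.mem_image_of_mem Prod.fst
          (Finset.mem_filter.mpr ⟨he, hω⟩)) ha
      · simp at hω
        exact hω.symm
    · rw [offK_apply_not_mem hb]

lemma TJ_onJ (hM : IsMatching M) {τ : α → Bool} {J : Finset (α × β)}
    (hτ : ∀ e ∈ M, τ e.1 = false) (hJ : J ⊆ M) :
    TJ M (onJ τ J) = J := by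
  ext e
  rw [TJ, Finset.mem_filter]
  constructor
  · rintro ⟨heM, htrue⟩
    by_cases hin : e.1 ∈ J.image Prod.fst
    · rcases Finset.mem_image.mp hin with ⟨e', he', h1⟩
      rwa [IsMatching.fst_inj hM heM (hJ he') h1.symm]
    · rw [onJ, onK_apply_not_mem hin, hτ e heM] at htrue
      exact absurd htrue (by simp)
  · intro he
    exact ⟨hJ he, by rw [onJ, onK_apply_mem (Finset.mem_image_of_mem Prod.fst he)]⟩

lemma pivT_onJ {τ : α → Bool} {J : Finset (α × β)}
    (hτ : ∀ e ∈ M, τ e.1 = false) (hJ : J ⊆ M) :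
    pivT M (onJ τ J) = τ := by
  funext a
  rw [pivT]
  by_cases ha : a ∈ M.image Prod.fst
  · rw [offK_apply_mem ha]
    rcases Finset.mem_image.mp ha with ⟨e, he, rfl⟩
    exact (hτ e he).symm
  · rw [offK_apply_not_mem ha, onJ, onK_apply_not_mem
      (fun hc => ha (Finset.image_subset_image hJ hc))]

lemma sum_fiber_T (hM : IsMatching M) (F : (α → Bool) → ℝ) :
    ∑ ω : α → Bool, F ω =
      ∑ x ∈ (Finset.univ.filter fun τ : α → Bool => ∀ e ∈ M, τ e.1 = false).sigma
          (fun _ => M.powerset),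
        F (onJ x.1 x.2) := by
  refine Finset.sum_bij' (i := fun ω _ => ⟨pivT M ω, TJ M ω⟩)
    (j := fun x _ => onJ x.1 x.2) ?_ ?_ ?_ ?_ ?_
  · intro ω _
    rw [Finset.mem_sigma]
    constructor
    · rw [Finset.mem_filter]
      refine ⟨Finset.mem_univ _, fun e he => ?_⟩
      exact offK_apply_mem (Finset.mem_image_of_mem Prod.fst he)
    · exact Finset.mem_powerset.mpr (Finset.filter_subset _ _)
  · intro x _
    exact Finset.mem_univ _
  · intro ω _
    exact onJ_pivT M ω
  · intro x hx
    rw [Finset.mem_sigma, Finset.mem_filter, Finset.mem_powerset] at hx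
    obtain ⟨⟨_, hτ⟩, hJ⟩ := hx
    exact Sigma.ext (pivT_onJ M hτ hJ) (heq_of_eq (TJ_onJ M hM hτ hJ))
  · intro ω _
    rw [onJ_pivT M ω]

/-- weight factorization for the `T`-decomposition. -/
lemma wt_onJT (p : ℝ) (hM : IsMatching M) {τ : α → Bool} {J : Finset (α × β)}
    (hτ : ∀ e ∈ M, τ e.1 = false) (hJ : J ⊆ M) :
    wt p (onJ τ J) =
      (∏ a ∈ (M.image Prod.fst)ᶜ, (if τ a then p else 1 - p)) *
        (p ^ J.card * (1 - p) ^ (M.card - J.card)) := by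
  have himg : J.image Prod.fst ⊆ M.image Prod.fst := Finset.image_subset_image hJ
  have hJcard : (J.image Prod.fst).card = J.card :=
    Finset.card_image_of_injOn (fun e he e' he' h => IsMatching.fst_inj hM (hJ he) (hJ he') h)
  have hCcard : (M.image Prod.fst).card = M.card :=
    Finset.card_image_of_injOn (fun e he e' he' h => IsMatching.fst_inj hM he he' h)
  rw [wt, ← Finset.prod_mul_prod_compl (M.image Prod.fst)
    (fun a => if onJ τ J a then p else 1 - p)]
  have h1 : ∏ a ∈ (M.image Prod.fst)ᶜ, (if onJ τ J a then p else 1 - p)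
      = ∏ a ∈ (M.image Prod.fst)ᶜ, (if τ a then p else 1 - p) := by
    refine Finset.prod_congr rfl (fun a ha => ?_)
    have : a ∉ J.image Prod.fst := fun hc => (Finset.mem_compl.mp ha) (himg hc)
    rw [onJ, onK_apply_not_mem this]
  have h2 : ∏ a ∈ M.image Prod.fst, (if onJ τ J a then p else 1 - p)
      = p ^ J.card * (1 - p) ^ (M.card - J.card) := by
    rw [← Finset.prod_sdiff himg]
    have hJpart : ∏ a ∈ J.image Prod.fst, (if onJ τ J a then p else 1 - p) = p ^ J.card := by
      rw [← hJcard, ← Finset.prod_const]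
      refine Finset.prod_congr rfl (fun a ha => ?_)
      rw [onJ, onK_apply_mem ha, if_pos rfl]
    have hCpart : ∏ a ∈ M.image Prod.fst \ J.image Prod.fst, (if onJ τ J a then p else 1 - p)
        = (1 - p) ^ (M.card - J.card) := by
      have hcard : (M.image Prod.fst \ J.image Prod.fst).card = M.card - J.card := by
        rw [Finset.card_sdiff_of_subset himg, hJcard, hCcard]
      rw [← hcard, ← Finset.prod_const]
      refine Finset.prod_congr rfl (fun a ha => ?_)
      rw [Finset.mem_sdiff] at ha
      rcases Finset.mem_image.mp ha.1 with ⟨e, he, h1⟩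
      rw [onJ, onK_apply_not_mem ha.2, ← h1, hτ e he]
      simp
    rw [hJpart, hCpart]
    ring
  rw [h1, h2]
  ring

end FiberT

end Lemma42

namespace Lemma42

open Finset
open scoped Classical

section Tails

variable {α β : Type*} [DecidableEq α] [DecidableEq β] [Fintype α] [Fintype β]
variable (d : ℕ) (π : List (α × β)) (M : Finset (α × β))

lemma sum_fiber' (hM : IsMatching M) (F : (α → Bool) → ℝ) :
    ∑ ω : α → Bool, F ω =
      ∑ τ ∈ Finset.univ.filter (fun τ : α → Bool => bl d π M τ = ∅),
        ∑ J ∈ (cand d π M τ).powerset, F (onJ τ J) := by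
  rw [sum_fiber d π M hM F, Finset.sum_sigma]

lemma sum_fiber_T' (hM : IsMatching M) (F : (α → Bool) → ℝ) :
    ∑ ω : α → Bool, F ω =
      ∑ τ ∈ Finset.univ.filter (fun τ : α → Bool => ∀ e ∈ M, τ e.1 = false),
        ∑ J ∈ M.powerset, F (onJ τ J) := by
  rw [sum_fiber_T M hM F, Finset.sum_sigma]

end Tails

end Lemma42

namespace Lemma42

open Finset
open scoped Classical

section Tails2

variable {α β : Type*} [DecidableEq α] [DecidableEq β] [Fintype α] [Fintype β]
variable (d : ℕ) (π : List (α × β)) (M : Finset (α × β))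

/-- tail bound for the bad event `|T| < s`. -/
lemma sum_badT_le (hM : IsMatching M) {p t s : ℝ} (hp0 : 0 < p) (hp1 : p ≤ 1)
    (ht : 0 < t) (hs : s ≤ p * M.card - t) (hM0 : 0 < M.card) :
    ∑ ω : α → Bool,
      (if ((M.filter fun e => ω e.1 = true).card : ℝ) < s then wt p ω else 0)
      ≤ Real.exp (-2 * t ^ 2 / M.card) := by
  have hq0 : (0:ℝ) ≤ 1 - p := by linarith
  have hpq : p + (1 - p) = 1 := by ring
  rw [sum_fiber_T' M hM]
  have hrest1 : ∑ τ ∈ Finset.univ.filter (fun τ : α → Bool => ∀ e ∈ M, τ e.1 = false),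
      (∏ a ∈ (M.image Prod.fst)ᶜ, (if τ a then p else 1 - p)) = 1 := by
    have h0 := sum_wt (α := α) p
    rw [sum_fiber_T' M hM] at h0
    refine Eq.trans (Finset.sum_congr rfl (fun τ hτ => ?_)) h0
    rw [Finset.mem_filter] at hτ
    symm
    calc ∑ J ∈ M.powerset, wt p (onJ τ J)
        = ∑ J ∈ M.powerset, (∏ a ∈ (M.image Prod.fst)ᶜ, (if τ a then p else 1 - p)) *
          (p ^ J.card * (1 - p) ^ (M.card - J.card)) :=
          Finset.sum_congr rfl (fun J hJ =>
            wt_onJT M p hM hτ.2 (Finset.mem_powerset.mp hJ))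
      _ = ∏ a ∈ (M.image Prod.fst)ᶜ, (if τ a then p else 1 - p) := by
          rw [← Finset.mul_sum, binomial_total _ hpq, mul_one]
  calc ∑ τ ∈ Finset.univ.filter (fun τ : α → Bool => ∀ e ∈ M, τ e.1 = false),
        ∑ J ∈ M.powerset,
          (if ((M.filter fun e => onJ τ J e.1 = true).card : ℝ) < s
            then wt p (onJ τ J) else 0)
      ≤ ∑ τ ∈ Finset.univ.filter (fun τ : α → Bool => ∀ e ∈ M, τ e.1 = false),
        (∏ a ∈ (M.image Prod.fst)ᶜ, (if τ a then p else 1 - p)) *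
          Real.exp (-2 * t ^ 2 / M.card) := by
        refine Finset.sum_le_sum (fun τ hτ => ?_)
        rw [Finset.mem_filter] at hτ
        have hrestnn : (0:ℝ) ≤ ∏ a ∈ (M.image Prod.fst)ᶜ, (if τ a then p else 1 - p) := by
          refine Finset.prod_nonneg (fun a _ => ?_)
          split <;> linarith
        have hinner : ∑ J ∈ M.powerset,
            (if ((M.filter fun e => onJ τ J e.1 = true).card : ℝ) < s
              then wt p (onJ τ J) else 0)
            = (∏ a ∈ (M.image Prod.fst)ᶜ, (if τ a then p else 1 - p)) *
              ∑ J ∈ M.powerset,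
                (if ((J.card : ℝ)) < s then p ^ J.card * (1 - p) ^ (M.card - J.card) else 0) := by
          rw [Finset.mul_sum]
          refine Finset.sum_congr rfl (fun J hJ => ?_)
          rw [Finset.mem_powerset] at hJ
          have hTJ : M.filter (fun e => onJ τ J e.1 = true) = J := TJ_onJ M hM hτ.2 hJ
          rw [hTJ, wt_onJT M p hM hτ.2 hJ, mul_ite, mul_zero]
        rw [hinner]
        exact mul_le_mul_of_nonneg_left
          (chernoff_lower M hp0 hq0 hpq ht hs hM0) hrestnn
    _ = Real.exp (-2 * t ^ 2 / M.card) := by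
        rw [← Finset.sum_mul, hrest1, one_mul]

end Tails2

end Lemma42

namespace Lemma42

open Finset
open scoped Classical

section Tails3

variable {α β : Type*} [DecidableEq α] [DecidableEq β] [Fintype α] [Fintype β]
variable (d : ℕ) (π : List (α × β)) (M : Finset (α × β))

lemma Sw_card_le_dmu (ω : α → Bool) :
    (Sw d π ω).card ≤ d * matchingNumber π.toFinset := by
  refine card_run_le_mul π.toFinset _ ?_
  intro e he
  rw [List.mem_toFinset] at he ⊢
  exact (List.mem_filter.mp he).1

lemma degB_sat_of_cand (hd : 1 ≤ d) (hME : M ⊆ π.toFinset) {τ : α → Bool}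
    {e : α × β} (he : e ∈ cand d π M τ) : d ≤ degB (Sw d π τ) e.2 := by
  obtain ⟨heM, hτe, hdeg⟩ := Finset.mem_filter.mp he
  have hSw : Sw d π (onK τ {e.1}) = Sw d π τ := Sw_onK_single hτe hdeg
  have hmem : e ∈ π.filter (fun x => onK τ {e.1} x.1) := by
    rw [List.mem_filter]
    exact ⟨List.mem_toFinset.mp (hME heM),
      onK_apply_mem (Finset.mem_singleton_self _)⟩
  have hblock := blocking hd (π.filter (fun x => onK τ {e.1} x.1)) ∅ e hmem
  have hrun : run d (π.filter (fun x => onK τ {e.1} x.1)) ∅ = Sw d π (onK τ {e.1}) := rfl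
  rw [hrun] at hblock
  rcases hblock with h | h
  · rw [hdeg] at h
    omega
  · rwa [hSw] at h

lemma cand_card_le (hd : 1 ≤ d) (hM : IsMatching M) (hME : M ⊆ π.toFinset)
    (τ : α → Bool) : d * (cand d π M τ).card ≤ (Sw d π τ).card := by
  have hsub : cand d π M τ ⊆ M := Finset.filter_subset _ _
  have hinj : ((cand d π M τ).image Prod.snd).card = (cand d π M τ).card :=
    Finset.card_image_of_injOn
      (fun e he e' he' h => IsMatching.snd_inj hM (hsub he) (hsub he') h)
  rw [← hinj]
  refine card_saturated_le _ _ (fun b hb => ?_)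
  rcases Finset.mem_image.mp hb with ⟨e, he, rfl⟩
  exact degB_sat_of_cand d π M hd hME he

lemma T_card_le (hM : IsMatching M) (ω : α → Bool) :
    (M.filter fun e => ω e.1 = true).card ≤ (Sw d π ω).card + (bl d π M ω).card := by
  have hsub : M.filter (fun e => ω e.1 = true)
      ⊆ (M.filter fun e => 1 ≤ degA (Sw d π ω) e.1) ∪ bl d π M ω := by
    intro e he
    obtain ⟨heM, hωe⟩ := Finset.mem_filter.mp he
    by_cases h0 : degA (Sw d π ω) e.1 = 0
    · exact Finset.mem_union_right _ (Finset.mem_filter.mpr ⟨heM, hωe, h0⟩)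
    · exact Finset.mem_union_left _
        (Finset.mem_filter.mpr ⟨heM, Nat.one_le_iff_ne_zero.mpr h0⟩)
  refine (Finset.card_le_card hsub).trans ((Finset.card_union_le _ _).trans ?_)
  have hmatched : (M.filter fun e => 1 ≤ degA (Sw d π ω) e.1).card ≤ (Sw d π ω).card := by
    have hsub2 : M.filter (fun e => 1 ≤ degA (Sw d π ω) e.1) ⊆ M := Finset.filter_subset _ _
    have himg : ((M.filter fun e => 1 ≤ degA (Sw d π ω) e.1).image Prod.fst).card
        = (M.filter fun e => 1 ≤ degA (Sw d π ω) e.1).card :=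
      Finset.card_image_of_injOn
        (fun e he e' he' h => IsMatching.fst_inj hM (hsub2 he) (hsub2 he') h)
    rw [← himg]
    refine (Finset.card_le_card ?_).trans (card_matched_le (Sw d π ω))
    intro a ha
    rcases Finset.mem_image.mp ha with ⟨e, he, rfl⟩
    exact Finset.mem_filter.mpr ⟨Finset.mem_univ _, (Finset.mem_filter.mp he).2⟩
  omega

/-- tail bound for the bad event `Z > p·f/d + t`. -/
lemma sum_badZ_le (hd : 1 ≤ d) (hM : IsMatching M) (hME : M ⊆ π.toFinset)
    {p t : ℝ} (hp0 : 0 < p) (hp1 : p ≤ 1) (ht : 0 < t)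
    {n : ℕ} (hn0 : 0 < n) (hfn : ∀ τ : α → Bool, (Sw d π τ).card ≤ d * n) :
    ∑ ω : α → Bool,
      (if p * ((Sw d π ω).card : ℝ) / d + t < ((bl d π M ω).card : ℝ)
        then wt p ω else 0)
      ≤ Real.exp (-2 * t ^ 2 / n) := by
  have hq0 : (0:ℝ) ≤ 1 - p := by linarith
  have hpq : p + (1 - p) = 1 := by ring
  have hd0 : (0:ℝ) < (d : ℝ) := by exact_mod_cast hd
  rw [sum_fiber' d π M hM]
  have hrest1 : ∑ τ ∈ Finset.univ.filter (fun τ : α → Bool => bl d π M τ = ∅),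
      (∏ a ∈ (candA d π M τ)ᶜ, (if τ a then p else 1 - p)) = 1 := by
    have h0 := sum_wt (α := α) p
    rw [sum_fiber' d π M hM] at h0
    refine Eq.trans (Finset.sum_congr rfl (fun τ hτ => ?_)) h0
    symm
    calc ∑ J ∈ (cand d π M τ).powerset, wt p (onJ τ J)
        = ∑ J ∈ (cand d π M τ).powerset,
          (∏ a ∈ (candA d π M τ)ᶜ, (if τ a then p else 1 - p)) *
            (p ^ J.card * (1 - p) ^ ((cand d π M τ).card - J.card)) :=
          Finset.sum_congr rfl (fun J hJ =>
            wt_onJ d π M p hM (Finset.mem_powerset.mp hJ))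
      _ = ∏ a ∈ (candA d π M τ)ᶜ, (if τ a then p else 1 - p) := by
          rw [← Finset.mul_sum, binomial_total _ hpq, mul_one]
  calc ∑ τ ∈ Finset.univ.filter (fun τ : α → Bool => bl d π M τ = ∅),
        ∑ J ∈ (cand d π M τ).powerset,
          (if p * ((Sw d π (onJ τ J)).card : ℝ) / d + t < ((bl d π M (onJ τ J)).card : ℝ)
            then wt p (onJ τ J) else 0)
      ≤ ∑ τ ∈ Finset.univ.filter (fun τ : α → Bool => bl d π M τ = ∅),
        (∏ a ∈ (candA d π M τ)ᶜ, (if τ a then p else 1 - p)) *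
          Real.exp (-2 * t ^ 2 / n) := by
        refine Finset.sum_le_sum (fun τ hτ => ?_)
        rw [Finset.mem_filter] at hτ
        have hrestnn : (0:ℝ) ≤ ∏ a ∈ (candA d π M τ)ᶜ, (if τ a then p else 1 - p) := by
          refine Finset.prod_nonneg (fun a _ => ?_)
          split <;> linarith
        have hinner : ∑ J ∈ (cand d π M τ).powerset,
            (if p * ((Sw d π (onJ τ J)).card : ℝ) / d + t < ((bl d π M (onJ τ J)).card : ℝ)
              then wt p (onJ τ J) else 0)
            = (∏ a ∈ (candA d π M τ)ᶜ, (if τ a then p else 1 - p)) *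
              ∑ J ∈ (cand d π M τ).powerset,
                (if p * ((Sw d π τ).card : ℝ) / d + t < ((J.card : ℝ))
                  then p ^ J.card * (1 - p) ^ ((cand d π M τ).card - J.card) else 0) := by
          rw [Finset.mul_sum]
          refine Finset.sum_congr rfl (fun J hJ => ?_)
          rw [Finset.mem_powerset] at hJ
          rw [Sw_onJ d π M hJ, bl_onJ d π M hM hτ.2 hJ,
            wt_onJ d π M p hM hJ, mul_ite, mul_zero]
        rw [hinner]
        refine mul_le_mul_of_nonneg_left ?_ hrestnn
        have hcc := cand_card_le d π M hd hM hME τ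
        refine chernoff_upper (cand d π M τ) hp0 hq0 hpq ht ?_ ?_ hn0
        · have h1 : ((d:ℝ)) * ((cand d π M τ).card : ℝ) ≤ ((Sw d π τ).card : ℝ) := by
            exact_mod_cast hcc
          have h2 : ((cand d π M τ).card : ℝ) ≤ ((Sw d π τ).card : ℝ) / d := by
            rw [le_div_iff₀ hd0]
            linarith [h1]
          have h3 := mul_le_mul_of_nonneg_left h2 (le_of_lt hp0)
          rw [mul_div_assoc]
          linarith
        · have : d * (cand d π M τ).card ≤ d * n := hcc.trans (hfn τ)
          exact Nat.le_of_mul_le_mul_left this (by omega)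
    _ = Real.exp (-2 * t ^ 2 / n) := by
        rw [← Finset.sum_mul, hrest1, one_mul]

end Tails3

end Lemma42

open scoped Classical in
/-- Lemma 4.2 of the paper (with the explicit deviation term from the
Azuma–Hoeffding argument): with probability at least `1 − 2·μ(G)^{−18}` over the
random subset `A'` (each `a ∈ A` included independently with probability `p`),
`|Greedy_d(π_H)| ≥ (d/(d+p))·p·μ(G) − 6·√(d·μ(G)·ln μ(G))`. -/
theorem greedyD_size_high_probability {α β : Type*} [Fintype α] [Fintype β]
    [DecidableEq α] [DecidableEq β]
    (π : List (α × β)) (hnodup : π.Nodup)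
    (hμ : 2 ≤ matchingNumber π.toFinset)
    (p : ℝ) (hp0 : 0 < p) (hp1 : p ≤ 1) (d : ℕ) (hd : 1 ≤ d) :
    ENNReal.ofReal (1 - 2 / (matchingNumber π.toFinset : ℝ) ^ 18) ≤
      (Measure.pi fun _ : α =>
          (PMF.bernoulli (Real.toNNReal p) (Real.toNNReal_le_one.mpr hp1)).toMeasure)
        {ω : α → Bool |
          (d / (d + p)) * p * (matchingNumber π.toFinset : ℝ) -
              6 * Real.sqrt (d * (matchingNumber π.toFinset) *
                Real.log (matchingNumber π.toFinset)) ≤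
            ((greedyD d (π.filter fun e => ω e.1)).card : ℝ)} := by
  classical
  obtain ⟨M, hME, hMm, hMcard⟩ := Lemma42.exists_max_matching π.toFinset
  set μ : ℕ := matchingNumber π.toFinset with hμdef
  have hμ2 : (2:ℝ) ≤ (μ:ℝ) := by exact_mod_cast hμ
  have hμ0 : (0:ℝ) < (μ:ℝ) := by linarith
  have hμ1 : (1:ℝ) < (μ:ℝ) := by linarith
  have hμnat0 : 0 < μ := by omega
  have hL : 0 < Real.log (μ:ℝ) := Real.log_pos hμ1
  have hdR : (1:ℝ) ≤ (d:ℝ) := by exact_mod_cast hd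
  have hd0 : (0:ℝ) < (d:ℝ) := by linarith
  set t : ℝ := 3 * Real.sqrt ((d:ℝ) * (μ:ℝ) * Real.log (μ:ℝ)) with htdef
  have hdμL : (0:ℝ) ≤ (d:ℝ) * (μ:ℝ) * Real.log (μ:ℝ) := by positivity
  have hdμLpos : (0:ℝ) < (d:ℝ) * (μ:ℝ) * Real.log (μ:ℝ) := by positivity
  have ht : 0 < t := by
    rw [htdef]
    have := Real.sqrt_pos.mpr hdμLpos
    linarith
  have ht2 : t ^ 2 = 9 * ((d:ℝ) * (μ:ℝ) * Real.log (μ:ℝ)) := by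
    rw [htdef, mul_pow, Real.sq_sqrt hdμL]
    norm_num
  have hexp : Real.exp (-2 * t ^ 2 / (μ:ℝ)) ≤ 1 / (μ:ℝ) ^ 18 := by
    have h1 : -2 * t ^ 2 / (μ:ℝ) ≤ -18 * Real.log (μ:ℝ) := by
      rw [ht2]
      rw [show -2 * (9 * ((d:ℝ) * (μ:ℝ) * Real.log (μ:ℝ))) / (μ:ℝ)
          = -18 * ((d:ℝ) * Real.log (μ:ℝ)) by field_simp; ring]
      nlinarith [hL, hdR]
    refine (Real.exp_le_exp.mpr h1).trans ?_
    rw [show (-18:ℝ) * Real.log (μ:ℝ) = -(((18:ℕ):ℝ) * Real.log (μ:ℝ)) by norm_num,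
      Real.exp_neg, Real.exp_nat_mul, Real.exp_log hμ0, one_div]
  -- deterministic chain
  have hdet : ∀ ω : α → Bool,
      (p * (μ:ℝ) - t ≤ ((M.filter fun e => ω e.1 = true).card : ℝ)) →
      (((Lemma42.bl d π M ω).card : ℝ) ≤ p * ((Lemma42.Sw d π ω).card : ℝ) / d + t) →
      (d / (d + p)) * p * (μ:ℝ) - 6 * Real.sqrt (d * (μ:ℝ) * Real.log (μ:ℝ))
        ≤ ((Lemma42.Sw d π ω).card : ℝ) := by
    intro ω hT hZ
    have hTle : ((M.filter fun e => ω e.1 = true).card : ℝ)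
        ≤ ((Lemma42.Sw d π ω).card : ℝ) + ((Lemma42.bl d π M ω).card : ℝ) := by
      exact_mod_cast Lemma42.T_card_le d π M hMm ω
    have hdp0 : (0:ℝ) < (d:ℝ) + p := by linarith
    have hZ' : ((Lemma42.bl d π M ω).card : ℝ) * d
        ≤ p * ((Lemma42.Sw d π ω).card : ℝ) + t * d := by
      have h4 := mul_le_mul_of_nonneg_right hZ hd0.le
      calc ((Lemma42.bl d π M ω).card : ℝ) * d
          ≤ (p * ((Lemma42.Sw d π ω).card : ℝ) / d + t) * d := h4
        _ = p * ((Lemma42.Sw d π ω).card : ℝ) + t * d := by field_simp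
    have h5 : (p * (μ:ℝ) - t - ((Lemma42.Sw d π ω).card : ℝ)) * d
        ≤ ((Lemma42.bl d π M ω).card : ℝ) * d :=
      mul_le_mul_of_nonneg_right (by linarith) hd0.le
    have key : (d:ℝ) * (p * (μ:ℝ)) - 2 * t * (d:ℝ)
        ≤ ((Lemma42.Sw d π ω).card : ℝ) * ((d:ℝ) + p) := by nlinarith [h5, hZ']
    have hdp : (0:ℝ) < (d:ℝ) + p := by linarith
    have h6 : (d / ((d:ℝ) + p)) * p * (μ:ℝ) - 2 * t ≤ ((Lemma42.Sw d π ω).card : ℝ) := by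
      rw [div_mul_eq_mul_div, div_mul_eq_mul_div, sub_le_iff_le_add, div_le_iff₀ hdp]
      nlinarith [key, mul_nonneg ht.le hp0.le]
    have h7 : 2 * t = 6 * Real.sqrt (d * (μ:ℝ) * Real.log (μ:ℝ)) := by
      rw [htdef]; ring
    linarith
  -- tail bounds
  have hM0 : 0 < M.card := by omega
  have hfn : ∀ τ : α → Bool, (Lemma42.Sw d π τ).card ≤ d * μ :=
    fun τ => Lemma42.Sw_card_le_dmu d π τ
  have hbadT := Lemma42.sum_badT_le M hMm hp0 hp1 ht
    (s := p * (μ:ℝ) - t) (by rw [hMcard]) hM0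
  rw [hMcard] at hbadT
  have hbadZ := Lemma42.sum_badZ_le d π M hd hMm hME hp0 hp1 ht hμnat0 hfn
  -- sums over good worlds
  set good : Finset (α → Bool) := Finset.univ.filter (fun ω : α → Bool =>
    (d / (d + p)) * p * (μ:ℝ) - 6 * Real.sqrt (d * (μ:ℝ) * Real.log (μ:ℝ))
      ≤ ((Lemma42.Sw d π ω).card : ℝ)) with hgooddef
  have hwtnn : ∀ ω : α → Bool, 0 ≤ Lemma42.wt p ω :=
    fun ω => Lemma42.wt_nonneg hp0.le hp1 ω
  have hgoodsum : 1 - 2 / (μ:ℝ) ^ 18 ≤ ∑ ω ∈ good, Lemma42.wt p ω := by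
    have hsplit := Finset.sum_filter_add_sum_filter_not Finset.univ
      (fun ω : α → Bool =>
        (d / (d + p)) * p * (μ:ℝ) - 6 * Real.sqrt (d * (μ:ℝ) * Real.log (μ:ℝ))
          ≤ ((Lemma42.Sw d π ω).card : ℝ)) (Lemma42.wt p)
    rw [Lemma42.sum_wt p] at hsplit
    set badT : Finset (α → Bool) := Finset.univ.filter (fun ω : α → Bool =>
      ((M.filter fun e => ω e.1 = true).card : ℝ) < p * (μ:ℝ) - t) with hbadTdef
    set badZ : Finset (α → Bool) := Finset.univ.filter (fun ω : α → Bool =>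
      p * ((Lemma42.Sw d π ω).card : ℝ) / d + t < ((Lemma42.bl d π M ω).card : ℝ)) with hbadZdef
    have hTsum : ∑ ω ∈ badT, Lemma42.wt p ω ≤ 1 / (μ:ℝ) ^ 18 := by
      rw [hbadTdef, Finset.sum_filter]
      exact hbadT.trans hexp
    have hZsum : ∑ ω ∈ badZ, Lemma42.wt p ω ≤ 1 / (μ:ℝ) ^ 18 := by
      rw [hbadZdef, Finset.sum_filter]
      exact hbadZ.trans hexp
    have hsubbad : Finset.univ.filter (fun ω : α → Bool =>
        ¬ ((d / (d + p)) * p * (μ:ℝ) - 6 * Real.sqrt (d * (μ:ℝ) * Real.log (μ:ℝ))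
          ≤ ((Lemma42.Sw d π ω).card : ℝ))) ⊆ badT ∪ badZ := by
      intro ω hω
      rw [Finset.mem_filter] at hω
      by_contra hc
      rw [Finset.mem_union, hbadTdef, hbadZdef, Finset.mem_filter, Finset.mem_filter] at hc
      push_neg at hc
      exact hω.2 (hdet ω (hc.1 (Finset.mem_univ ω)) (hc.2 (Finset.mem_univ ω)))
    have hbadsum : ∑ ω ∈ Finset.univ.filter (fun ω : α → Bool =>
        ¬ ((d / (d + p)) * p * (μ:ℝ) - 6 * Real.sqrt (d * (μ:ℝ) * Real.log (μ:ℝ))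
          ≤ ((Lemma42.Sw d π ω).card : ℝ))), Lemma42.wt p ω ≤ 2 / (μ:ℝ) ^ 18 := by
      refine le_trans (Finset.sum_le_sum_of_subset_of_nonneg hsubbad
        (fun ω _ _ => hwtnn ω)) ?_
      have hun : badT ∪ badZ = badT ∪ (badZ \ badT) := by
        rw [Finset.union_sdiff_self_eq_union]
      rw [hun, Finset.sum_union Finset.sdiff_disjoint.symm]
      have h8 : ∑ ω ∈ badZ \ badT, Lemma42.wt p ω ≤ ∑ ω ∈ badZ, Lemma42.wt p ω :=
        Finset.sum_le_sum_of_subset_of_nonneg (Finset.sdiff_subset)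
          (fun ω _ _ => hwtnn ω)
      have : (2:ℝ) / (μ:ℝ) ^ 18 = 1 / (μ:ℝ) ^ 18 + 1 / (μ:ℝ) ^ 18 := by ring
      rw [this]
      exact add_le_add hTsum (h8.trans hZsum)
    linarith
  -- measurable sets
  have hsing : ∀ ω : α → Bool, MeasurableSet ({ω} : Set (α → Bool)) := by
    intro ω
    rw [← Set.univ_pi_singleton ω]
    exact MeasurableSet.univ_pi (fun a => measurableSet_singleton _)
  have hsingleton : ∀ ω : α → Bool,
      (Measure.pi fun _ : α =>
        (PMF.bernoulli (Real.toNNReal p) (Real.toNNReal_le_one.mpr hp1)).toMeasure) {ω}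
        = ENNReal.ofReal (Lemma42.wt p ω) := by
    intro ω
    rw [← Set.univ_pi_singleton ω, MeasureTheory.Measure.pi_pi]
    rw [show Lemma42.wt p ω = ∏ a : α, (if ω a then p else 1 - p) from rfl]
    rw [ENNReal.ofReal_prod_of_nonneg (fun a _ => by split <;> linarith)]
    refine Finset.prod_congr rfl (fun a _ => ?_)
    rw [PMF.toMeasure_apply_singleton _ _ (measurableSet_singleton _),
      PMF.bernoulli_apply]
    cases hb : ω a
    · simp only [Bool.cond_false]
      rw [if_neg (by simp)]
      rw [ENNReal.ofReal_sub 1 hp0.le, ENNReal.ofReal_one]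
      rw [ENNReal.coe_sub, ENNReal.coe_one]; rfl
    · simp only [Bool.cond_true]
      norm_num
      rfl
  have hfinsum :
      (Measure.pi fun _ : α =>
        (PMF.bernoulli (Real.toNNReal p) (Real.toNNReal_le_one.mpr hp1)).toMeasure)
        (↑good : Set (α → Bool)) = ∑ ω ∈ good, ENNReal.ofReal (Lemma42.wt p ω) := by
    rw [show (↑good : Set (α → Bool)) = ⋃ ω ∈ good, {ω} by ext x; simp]
    rw [MeasureTheory.measure_biUnion_finset ?_ (fun ω _ => hsing ω)]
    · exact Finset.sum_congr rfl (fun ω _ => hsingleton ω)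
    · intro x _ y _ hxy
      simp [Function.onFun, Set.disjoint_singleton, hxy]
  have hsub : (↑good : Set (α → Bool)) ⊆
      {ω : α → Bool |
        (d / (d + p)) * p * (μ:ℝ) -
            6 * Real.sqrt (d * (μ:ℝ) * Real.log (μ:ℝ)) ≤
          ((greedyD d (π.filter fun e => ω e.1)).card : ℝ)} := by
    intro ω hω
    exact (Finset.mem_filter.mp (Finset.mem_coe.mp hω)).2
  refine le_trans ?_ (measure_mono hsub)
  rw [hfinsum, ← ENNReal.ofReal_sum_of_nonneg (fun ω _ => hwtnn ω)]
  exact ENNReal.ofReal_le_ofReal hgoodsum
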